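/- In the lower-bound instance for the non-adaptive algorithm: if for each of t vertices the algorithm queries only 2 incident edges, each existing independently with probability p = 1/2, then the expected number of these vertices left with no existing queried edge is at least t/4; consequently the expected matching size produced is at most (5/4)·t while the omniscient optimum is at least (3/2)·t − o(t), giving approximation ratio at most 5/6 + o(1). -/

import Mathlib

open Finset

/-- Vertex set of the lower-bound instance with `t = m + m`: the four parts are
`A` (size `m`), `B` (size `m+m`), `C` (size `m+m`) and `D` (size `m`);
`B1, C1` are the index ranges `[0,m)` and `B2, C2` the index ranges `[m, m+m)`. -/
abbrev Vt (m : ℕ) := (Fin m ⊕ Fin (m + m)) ⊕ (Fin (m + m) ⊕ Fin m)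

/-- The full edge set: a perfect matching between `B` and `C`, a complete bipartite graph
between `A` and `B`, and a complete bipartite graph between `C` and `D`. -/
def graphE (m : ℕ) : Finset (Finset (Vt m)) :=
  (Finset.univ.image fun i : Fin (m + m) =>
    ({Sum.inl (Sum.inr i), Sum.inr (Sum.inl i)} : Finset (Vt m))) ∪
  (Finset.univ.image fun q : Fin m × Fin (m + m) =>
    ({Sum.inl (Sum.inl q.1), Sum.inl (Sum.inr q.2)} : Finset (Vt m))) ∪
  (Finset.univ.image fun q : Fin (m + m) × Fin m =>
    ({Sum.inr (Sum.inl q.1), Sum.inr (Sum.inr q.2)} : Finset (Vt m)))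

/-- The edges queried by the (adversarially tie-broken) non-adaptive algorithm: all `B–C`
perfect matching edges, a perfect matching `A ↔ B1`, a perfect matching `A ↔ B2`,
a perfect matching `C1 ↔ D` and a perfect matching `C2 ↔ D`; in particular every vertex of
`B2 ∪ C2` has exactly `2` incident queried edges. -/
def Wq (m : ℕ) : Finset (Finset (Vt m)) :=
  (Finset.univ.image fun i : Fin (m + m) =>
    ({Sum.inl (Sum.inr i), Sum.inr (Sum.inl i)} : Finset (Vt m))) ∪
  (Finset.univ.image fun i : Fin m =>
    ({Sum.inl (Sum.inl i), Sum.inl (Sum.inr (Fin.castAdd m i))} : Finset (Vt m))) ∪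
  (Finset.univ.image fun i : Fin m =>
    ({Sum.inl (Sum.inl i), Sum.inl (Sum.inr (Fin.natAdd m i))} : Finset (Vt m))) ∪
  (Finset.univ.image fun i : Fin m =>
    ({Sum.inr (Sum.inl (Fin.castAdd m i)), Sum.inr (Sum.inr i)} : Finset (Vt m))) ∪
  (Finset.univ.image fun i : Fin m =>
    ({Sum.inr (Sum.inl (Fin.natAdd m i)), Sum.inr (Sum.inr i)} : Finset (Vt m)))

/-- The `t = m + m` vertices of `B2 ∪ C2` (the bottom halves of `B` and `C`). -/
def B2C2 (m : ℕ) : Finset (Vt m) :=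
  (Finset.univ.image fun i : Fin m => (Sum.inl (Sum.inr (Fin.natAdd m i)) : Vt m)) ∪
  (Finset.univ.image fun i : Fin m => (Sum.inr (Sum.inl (Fin.natAdd m i)) : Vt m))

/-- `matchNum F` is the maximum matching size of the graph with edge set `F`. -/
def matchNum {V : Type*} [DecidableEq V] (F : Finset (Finset V)) : ℕ :=
  (F.powerset.filter (fun M => ∀ e ∈ M, ∀ f ∈ M, e ≠ f → e ∩ f = ∅)).sup Finset.card

/-- Expected maximum matching size of the random subgraph of `G` with edge probability `p`. -/
noncomputable def expMatch {V : Type*} [DecidableEq V] (G : Finset (Finset V)) (p : ℝ) : ℝ :=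
  ∑ S ∈ G.powerset, p ^ S.card * (1 - p) ^ (G.card - S.card) * (matchNum S : ℝ)


section Generic
variable {V : Type*} [DecidableEq V]




lemma matchNum_le {F : Finset (Finset V)} {k : ℕ}
    (h : ∀ M ⊆ F, (∀ e ∈ M, ∀ f ∈ M, e ≠ f → e ∩ f = ∅) → M.card ≤ k) :
    matchNum F ≤ k := by
  apply Finset.sup_le
  intro M hM
  simp only [Finset.mem_filter, Finset.mem_powerset] at hM
  exact h M hM.1 (fun e he f hf hef => hM.2 e he f hf hef)

lemma le_matchNum {F M : Finset (Finset V)} (hMF : M ⊆ F)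
    (h : ∀ e ∈ M, ∀ f ∈ M, e ≠ f → e ∩ f = ∅) : M.card ≤ matchNum F :=
  Finset.le_sup (by
    simp only [Finset.mem_filter, Finset.mem_powerset]
    exact ⟨hMF, fun e he f hf hef => h e he f hf hef⟩)

lemma exists_max_matching (F : Finset (Finset V)) :
    ∃ M ⊆ F, (∀ e ∈ M, ∀ f ∈ M, e ≠ f → e ∩ f = ∅) ∧ M.card = matchNum F := by
  have hne : (F.powerset.filter (fun M => ∀ e ∈ M, ∀ f ∈ M, e ≠ f → e ∩ f = ∅)).Nonempty :=
    ⟨∅, by simp⟩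
  obtain ⟨M, hM, hcard⟩ := Finset.exists_mem_eq_sup _ hne Finset.card
  simp only [Finset.mem_filter, Finset.mem_powerset] at hM
  exact ⟨M, hM.1, fun e he f hf hef => hM.2 e he f hf hef, hcard.symm⟩

lemma matchNum_mono {F G : Finset (Finset V)} (h : F ⊆ G) : matchNum F ≤ matchNum G := by
  apply matchNum_le
  intro M hM hm
  exact le_matchNum (hM.trans h) hm

@[simp] lemma matchNum_empty : matchNum (∅ : Finset (Finset V)) = 0 := by
  simp [matchNum]

lemma matchNum_add_one {F S : Finset (Finset V)} {e : Finset V} (heF : e ∈ F) (hSF : S ⊆ F)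
    (hne : e.Nonempty) (hd : ∀ f ∈ S, e ∩ f = ∅) :
    matchNum S + 1 ≤ matchNum F := by
  obtain ⟨M, hMS, hm, hcard⟩ := exists_max_matching S
  have heM : e ∉ M := by
    intro h
    have := hd e (hMS h)
    rw [Finset.inter_self] at this
    exact hne.ne_empty this
  have : (insert e M).card ≤ matchNum F := by
    apply le_matchNum
    · intro f hf
      rcases Finset.mem_insert.1 hf with rfl | hf
      · exact heF
      · exact hSF (hMS hf)
    · intro a ha b hb hab
      rcases Finset.mem_insert.1 ha with hae | ha'
      · subst hae
        rcases Finset.mem_insert.1 hb with hbe | hb'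
        · exact absurd hbe.symm hab
        · exact hd b (hMS hb')
      · rcases Finset.mem_insert.1 hb with hbe | hb'
        · subst hbe; rw [Finset.inter_comm]; exact hd a (hMS ha')
        · exact hm a ha' b hb' hab
  rwa [Finset.card_insert_of_notMem heM, hcard] at this

/-- vertex-disjoint union superadditivity -/
lemma matchNum_union_ge {X Y : Finset (Finset V)}
    (hX : ∀ e ∈ X, e.Nonempty) (hd : ∀ e ∈ X, ∀ f ∈ Y, e ∩ f = ∅) :
    matchNum X + matchNum Y ≤ matchNum (X ∪ Y) := by
  obtain ⟨MX, hMX, hmX, hcX⟩ := exists_max_matching X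
  obtain ⟨MY, hMY, hmY, hcY⟩ := exists_max_matching Y
  have hdisj : Disjoint MX MY := by
    rw [Finset.disjoint_left]
    intro e heX heY
    have := hd e (hMX heX) e (hMY heY)
    rw [Finset.inter_self] at this
    exact (hX e (hMX heX)).ne_empty this
  have : (MX ∪ MY).card ≤ matchNum (X ∪ Y) := by
    apply le_matchNum
    · exact Finset.union_subset (hMX.trans Finset.subset_union_left)
        (hMY.trans Finset.subset_union_right)
    · intro a ha b hb hab
      rcases Finset.mem_union.1 ha with ha' | ha'
      · rcases Finset.mem_union.1 hb with hb' | hb'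
        · exact hmX a ha' b hb' hab
        · exact hd a (hMX ha') b (hMY hb')
      · rcases Finset.mem_union.1 hb with hb' | hb'
        · rw [Finset.inter_comm]; exact hd b (hMX hb') a (hMY ha')
        · exact hmY a ha' b hb' hab
  rwa [Finset.card_union_of_disjoint hdisj, hcX, hcY] at this

/-- sum over powerset of a disjoint union -/
lemma sum_powerset_union' {α β : Type*} [DecidableEq α] [AddCommMonoid β]
    {s t : Finset α} (h : Disjoint s t) (f : Finset α → β) :
    ∑ S ∈ (s ∪ t).powerset, f S = ∑ u ∈ s.powerset, ∑ v ∈ t.powerset, f (u ∪ v) := by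
  rw [← Finset.sum_product']
  apply Finset.sum_nbij' (fun S => (S ∩ s, S ∩ t)) (fun p => p.1 ∪ p.2)
  · intro S hS
    simp [Finset.mem_product, Finset.inter_subset_right]
  · intro p hp
    simp only [Finset.mem_product, Finset.mem_powerset] at hp
    simp only [Finset.mem_powerset]
    exact Finset.union_subset (hp.1.trans Finset.subset_union_left)
      (hp.2.trans Finset.subset_union_right)
  · intro S hS
    simp only [Finset.mem_powerset] at hS
    rw [← Finset.inter_union_distrib_left, Finset.inter_eq_left.2 hS]
  · intro p hp
    simp only [Finset.mem_product, Finset.mem_powerset] at hp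
    have e1 : p.2 ∩ s = ∅ :=
      Finset.disjoint_iff_inter_eq_empty.1 (Finset.disjoint_of_subset_left hp.2 h.symm)
    have e2 : p.1 ∩ t = ∅ :=
      Finset.disjoint_iff_inter_eq_empty.1 (Finset.disjoint_of_subset_left hp.1 h)
    have h1 : (p.1 ∪ p.2) ∩ s = p.1 := by
      rw [Finset.union_inter_distrib_right, Finset.inter_eq_left.2 hp.1, e1, Finset.union_empty]
    have h2 : (p.1 ∪ p.2) ∩ t = p.2 := by
      rw [Finset.union_inter_distrib_right, Finset.inter_eq_left.2 hp.2, e2, Finset.empty_union]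
    exact Prod.ext h1 h2
  · intro S hS
    simp only [Finset.mem_powerset] at hS
    congr
    rw [← Finset.inter_union_distrib_left, Finset.inter_eq_left.2 hS]

end Generic

section Generic2
variable {α : Type*} [DecidableEq α]

lemma powerset_filter_avoid (s : Finset α) (p : α → Prop) [DecidablePred p] :
    s.powerset.filter (fun S => ∀ e ∈ S, p e) = (s.filter p).powerset := by
  ext S
  simp only [Finset.mem_filter, Finset.mem_powerset]
  constructor
  · rintro ⟨h1, h2⟩ x hx
    exact Finset.mem_filter.2 ⟨h1 hx, h2 x hx⟩
  · intro h
    exact ⟨fun x hx => (Finset.mem_filter.1 (h hx)).1,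
      fun e he => (Finset.mem_filter.1 (h he)).2⟩

lemma card_powerset_filter_supset {s T : Finset α} (hT : T ⊆ s) :
    (s.powerset.filter (fun S => T ⊆ S)).card = 2 ^ (s.card - T.card) := by
  rw [← Finset.card_sdiff_of_subset hT, ← Finset.card_powerset]
  apply Finset.card_nbij' (fun S => S \ T) (fun u => u ∪ T)
  · intro S hS
    simp only [Finset.mem_coe, Finset.mem_filter, Finset.mem_powerset] at hS
    exact Finset.mem_powerset.2 (Finset.sdiff_subset_sdiff hS.1 Finset.Subset.rfl)
  · intro u hu
    simp only [Finset.mem_coe, Finset.mem_powerset] at hu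
    simp only [Finset.mem_coe, Finset.mem_filter, Finset.mem_powerset]
    exact ⟨Finset.union_subset (hu.trans (Finset.sdiff_subset)) hT, Finset.subset_union_right⟩
  · intro S hS
    simp only [Finset.mem_coe, Finset.mem_filter, Finset.mem_powerset] at hS
    exact Finset.sdiff_union_of_subset hS.2
  · intro u hu
    simp only [Finset.mem_coe, Finset.mem_powerset] at hu
    have : Disjoint u T := Finset.disjoint_of_subset_left hu Finset.sdiff_disjoint
    beta_reduce
    rw [Finset.union_sdiff_distrib, Finset.sdiff_self, Finset.union_empty, this.sdiff_eq_left]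

lemma sum_powerset_card_two (s : Finset α) :
    ∑ P ∈ s.powerset, (P.card : ℝ) * 2 = (s.card : ℝ) * 2 ^ s.card := by
  induction s using Finset.induction_on with
  | empty => simp
  | @insert a s ha ih =>
    rw [Finset.sum_powerset_insert ha]
    have h2 : ∀ t ∈ s.powerset, ((insert a t).card : ℝ) * 2 = (t.card : ℝ) * 2 + 2 := by
      intro t ht
      have hat : a ∉ t := fun h => ha (Finset.mem_powerset.1 ht h)
      rw [Finset.card_insert_of_notMem hat]; push_cast; ring
    rw [Finset.sum_congr rfl h2, Finset.sum_add_distrib, ih, Finset.sum_const,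
      Finset.card_powerset, Finset.card_insert_of_notMem ha]
    push_cast
    ring

lemma sum_powerset_var (s : Finset α) :
    ∑ P ∈ s.powerset, (2 * (P.card : ℝ) - (s.card : ℝ)) ^ 2 = (s.card : ℝ) * 2 ^ s.card := by
  induction s using Finset.induction_on with
  | empty => norm_num
  | @insert a s ha ih =>
    have key : ∀ t ∈ s.powerset,
        (2 * (t.card : ℝ) - ((insert a s).card : ℝ)) ^ 2
          + (2 * ((insert a t).card : ℝ) - ((insert a s).card : ℝ)) ^ 2
        = 2 * (2 * (t.card : ℝ) - (s.card : ℝ)) ^ 2 + 2 := by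
      intro t ht
      have hat : a ∉ t := fun h => ha (Finset.mem_powerset.1 ht h)
      rw [Finset.card_insert_of_notMem hat, Finset.card_insert_of_notMem ha]
      push_cast; ring
    calc ∑ P ∈ (insert a s).powerset, (2 * (P.card : ℝ) - ((insert a s).card : ℝ)) ^ 2
        = ∑ t ∈ s.powerset, ((2 * (t.card : ℝ) - ((insert a s).card : ℝ)) ^ 2
            + (2 * ((insert a t).card : ℝ) - ((insert a s).card : ℝ)) ^ 2) := by
          rw [Finset.sum_powerset_insert ha, Finset.sum_add_distrib]
      _ = ∑ t ∈ s.powerset, (2 * (2 * (t.card : ℝ) - (s.card : ℝ)) ^ 2 + 2) :=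
          Finset.sum_congr rfl key
      _ = ((insert a s).card : ℝ) * 2 ^ (insert a s).card := by
          rw [Finset.sum_add_distrib, ← Finset.mul_sum, ih, Finset.sum_const,
            Finset.card_powerset, Finset.card_insert_of_notMem ha]
          push_cast
          ring

end Generic2

section Generic3
variable {V : Type*} [DecidableEq V]
/-- complete bipartite edge set -/
def bip (X Y : Finset V) : Finset (Finset V) :=
  (X ×ˢ Y).image (fun p => ({p.1, p.2} : Finset V))

lemma mem_bip {X Y : Finset V} {e : Finset V} :
    e ∈ bip X Y ↔ ∃ x ∈ X, ∃ y ∈ Y, e = {x, y} := by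
  simp only [bip, Finset.mem_image, Finset.mem_product, Prod.exists]
  constructor
  · rintro ⟨x, y, ⟨hx, hy⟩, rfl⟩; exact ⟨x, hx, y, hy, rfl⟩
  · rintro ⟨x, hx, y, hy, rfl⟩; exact ⟨x, y, ⟨hx, hy⟩, rfl⟩

lemma pair_inter_empty {x y x' y' : V} (h1 : x ≠ x') (h2 : x ≠ y') (h3 : y ≠ x') (h4 : y ≠ y') :
    ({x, y} : Finset V) ∩ {x', y'} = ∅ := by
  ext a
  simp only [Finset.mem_inter, Finset.mem_insert, Finset.mem_singleton, Finset.notMem_empty,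
    iff_false, not_and]
  rintro (rfl | rfl) (rfl | rfl) <;> tauto

lemma pairx_inj (x : V) : Function.Injective (fun y => ({x, y} : Finset V)) := by
  intro a b hab
  simp only at hab
  have h1 : a ∈ ({x, b} : Finset V) := by rw [← hab]; simp
  have h2 : b ∈ ({x, a} : Finset V) := by rw [hab]; simp
  simp only [Finset.mem_insert, Finset.mem_singleton] at h1 h2
  rcases h1 with h1 | h1
  · rcases h2 with h2 | h2
    · exact h1.trans h2.symm
    · exact h2.symm
  · exact h1

/-- sum over powersets against intersection with a subfamily -/
lemma sum_powerset_inter {α : Type*} [DecidableEq α] {F' F'' : Finset α} (h : F'' ⊆ F')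
    (g : Finset α → ℝ) :
    ∑ S ∈ F'.powerset, g (S ∩ F'') = 2 ^ (F'.card - F''.card) * ∑ u ∈ F''.powerset, g u := by
  have hdisj : Disjoint F'' (F' \ F'') := Finset.disjoint_sdiff
  calc ∑ S ∈ F'.powerset, g (S ∩ F'')
      = ∑ u ∈ F''.powerset, ∑ w ∈ (F' \ F'').powerset, g ((u ∪ w) ∩ F'') := by
        rw [show F'.powerset = (F'' ∪ (F' \ F'')).powerset by
          rw [Finset.union_sdiff_of_subset h]]
        exact sum_powerset_union' hdisj (fun S => g (S ∩ F''))
    _ = ∑ u ∈ F''.powerset, (2:ℝ) ^ (F'.card - F''.card) * g u := by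
        apply Finset.sum_congr rfl; intro u hu'
        have h1 : ∀ w ∈ (F' \ F'').powerset, g ((u ∪ w) ∩ F'') = g u := by
          intro w hw
          simp only [Finset.mem_powerset] at hu' hw
          congr 1
          rw [Finset.union_inter_distrib_right, Finset.inter_eq_left.2 hu',
            Finset.disjoint_iff_inter_eq_empty.1
              (Finset.disjoint_of_subset_left hw Finset.sdiff_disjoint),
            Finset.union_empty]
        rw [Finset.sum_congr rfl h1, Finset.sum_const, nsmul_eq_mul, Finset.card_powerset,
          Finset.card_sdiff_of_subset h]
        push_cast
        ring
    _ = 2 ^ (F'.card - F''.card) * ∑ u ∈ F''.powerset, g u := by rw [← Finset.mul_sum]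

lemma greedy (n : ℕ) (X Y : Finset V) (hX : X.card = n) (hd : Disjoint X Y) :
    (((min X.card Y.card : ℕ) : ℝ) - 2 ^ (min X.card Y.card) * (1/2 : ℝ) ^ Y.card
      + (1/2) ^ Y.card)
      * 2 ^ (bip X Y).card
    ≤ ∑ S ∈ (bip X Y).powerset, (matchNum S : ℝ) := by
  induction n generalizing X Y with
  | zero =>
    have : X = ∅ := Finset.card_eq_zero.1 hX
    subst this
    simp [bip, matchNum_empty]
  | succ n ih =>
    rcases Y.eq_empty_or_nonempty with rfl | hYne
    · simp [bip, matchNum_empty]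
    · obtain ⟨y0, hy0⟩ := hYne
      have hXne : X.Nonempty := Finset.card_pos.1 (by omega)
      obtain ⟨x, hx⟩ := hXne
      have hX'card : (X.erase x).card = n := by
        rw [Finset.card_erase_of_mem hx, hX]; rfl
      have hxY : x ∉ Y := Finset.disjoint_left.1 hd hx
      set δ := Y.image (fun y => ({x, y} : Finset V)) with hδ
      set F' := bip (X.erase x) Y with hF'
      -- decomposition of bip X Y
      have hdec : bip X Y = δ ∪ F' := by
        ext e
        simp only [hδ, hF', Finset.mem_union, Finset.mem_image, mem_bip]
        constructor
        · rintro ⟨a, ha, y, hy, rfl⟩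
          by_cases hax : a = x
          · subst hax; exact Or.inl ⟨y, hy, rfl⟩
          · exact Or.inr ⟨a, Finset.mem_erase.2 ⟨hax, ha⟩, y, hy, rfl⟩
        · rintro (⟨y, hy, rfl⟩ | ⟨a, ha, y, hy, rfl⟩)
          · exact ⟨x, hx, y, hy, rfl⟩
          · exact ⟨a, (Finset.mem_erase.1 ha).2, y, hy, rfl⟩
      have hδF' : Disjoint δ F' := by
        rw [Finset.disjoint_left]
        rintro e heδ heF'
        simp only [hδ, Finset.mem_image] at heδ
        obtain ⟨y, hy, rfl⟩ := heδ
        obtain ⟨a, ha, y', hy', he⟩ := mem_bip.1 heF'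
        have hax : a ≠ x := (Finset.mem_erase.1 ha).1
        have : x ∈ ({a, y'} : Finset V) := by rw [← he]; simp
        simp only [Finset.mem_insert, Finset.mem_singleton] at this
        rcases this with rfl | rfl
        · exact hax rfl
        · exact hxY hy'
      have hδcard : δ.card = Y.card := Finset.card_image_of_injective _ (pairx_inj x)
      have hY1 : 1 ≤ Y.card := Finset.card_pos.2 ⟨y0, hy0⟩
      set r' := Y.card - 1 with hr'def
      set q' := min n r' with hq'def
      have hYr : Y.card = r' + 1 := by omega
      have hq : min (n + 1) Y.card = q' + 1 := by omega
      set L' : ℝ := (q' : ℝ) - 2 ^ q' * (1/2 : ℝ) ^ r' + (1/2) ^ r' with hL'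
      -- inner bound from induction hypothesis
      have inner : ∀ y ∈ Y,
          L' * 2 ^ F'.card
            ≤ ∑ S' ∈ F'.powerset, (matchNum (S' ∩ bip (X.erase x) (Y.erase y)) : ℝ) := by
        intro y hy
        have hsub : bip (X.erase x) (Y.erase y) ⊆ F' := by
          rw [hF']
          exact Finset.image_subset_image
            (Finset.product_subset_product Finset.Subset.rfl (Finset.erase_subset y Y))
        rw [sum_powerset_inter hsub (fun u => (matchNum u : ℝ))]
        have hd' : Disjoint (X.erase x) (Y.erase y) :=
          (hd.mono (Finset.erase_subset x X) (Finset.erase_subset y Y))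
        have hYe : (Y.erase y).card = r' := by rw [Finset.card_erase_of_mem hy]
        have ihy := ih (X.erase x) (Y.erase y) hX'card hd'
        rw [hX'card, hYe, ← hq'def] at ihy
        have hle : (bip (X.erase x) (Y.erase y)).card ≤ F'.card := Finset.card_le_card hsub
        calc L' * 2 ^ F'.card
            = 2 ^ (F'.card - (bip (X.erase x) (Y.erase y)).card)
              * (L' * 2 ^ (bip (X.erase x) (Y.erase y)).card) := by
              rw [← mul_assoc, mul_comm ((2:ℝ) ^ (F'.card - (bip (X.erase x) (Y.erase y)).card)) L',
                mul_assoc, pow_sub_mul_pow (2:ℝ) hle]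
          _ ≤ 2 ^ (F'.card - (bip (X.erase x) (Y.erase y)).card)
              * ∑ u ∈ (bip (X.erase x) (Y.erase y)).powerset, (matchNum u : ℝ) := by
              apply mul_le_mul_of_nonneg_left _ (by positivity)
              exact ihy
          _ = _ := rfl
      -- pointwise key bound with adaptive choice of y
      have key : ∀ T ∈ δ.powerset, ∃ y ∈ Y, ∀ S' ∈ F'.powerset,
          (if T = ∅ then (0:ℝ) else 1) + (matchNum (S' ∩ bip (X.erase x) (Y.erase y)) : ℝ)
            ≤ (matchNum (T ∪ S') : ℝ) := by
        intro T hT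
        rcases T.eq_empty_or_nonempty with rfl | ⟨t, ht⟩
        · refine ⟨y0, hy0, fun S' hS' => ?_⟩
          rw [if_pos rfl, zero_add, Finset.empty_union, Nat.cast_le]
          exact matchNum_mono Finset.inter_subset_left
        · have htδ : t ∈ δ := Finset.mem_powerset.1 hT ht
          simp only [hδ, Finset.mem_image] at htδ
          obtain ⟨y, hy, rfl⟩ := htδ
          refine ⟨y, hy, fun S' hS' => ?_⟩
          rw [if_neg (by intro h; rw [h] at ht; exact Finset.notMem_empty _ ht)]
          have hb : matchNum (S' ∩ bip (X.erase x) (Y.erase y)) + 1 ≤ matchNum (T ∪ S') := by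
            apply matchNum_add_one (e := ({x, y} : Finset V)) (Finset.mem_union_left _ ht)
              (Finset.inter_subset_left.trans Finset.subset_union_right) ⟨x, by simp⟩
            intro f hf
            obtain ⟨a, ha, b, hb, rfl⟩ := mem_bip.1 (Finset.mem_inter.1 hf).2
            have haX : a ∈ X := (Finset.mem_erase.1 ha).2
            have hbY : b ∈ Y := (Finset.mem_erase.1 hb).2
            have hyX : y ∉ X := Finset.disjoint_right.1 hd hy
            exact pair_inter_empty (fun h => (Finset.mem_erase.1 ha).1 h.symm)
              (fun h => hxY (h.symm ▸ hbY)) (fun h => hyX (h.symm ▸ haX))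
              (fun h => (Finset.mem_erase.1 hb).1 h.symm)
          rw [add_comm]
          exact_mod_cast hb
      -- per-T summed bound
      have main : ∀ T ∈ δ.powerset,
          (if T = ∅ then (0:ℝ) else 1) * 2 ^ F'.card + L' * 2 ^ F'.card
            ≤ ∑ S' ∈ F'.powerset, (matchNum (T ∪ S') : ℝ) := by
        intro T hT
        obtain ⟨y, hy, hkey⟩ := key T hT
        calc (if T = ∅ then (0:ℝ) else 1) * 2 ^ F'.card + L' * 2 ^ F'.card
            ≤ (if T = ∅ then (0:ℝ) else 1) * 2 ^ F'.card
              + ∑ S' ∈ F'.powerset, (matchNum (S' ∩ bip (X.erase x) (Y.erase y)) : ℝ) :=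
              add_le_add (le_refl _) (inner y hy)
          _ = ∑ S' ∈ F'.powerset, ((if T = ∅ then (0:ℝ) else 1)
              + (matchNum (S' ∩ bip (X.erase x) (Y.erase y)) : ℝ)) := by
              rw [Finset.sum_add_distrib, Finset.sum_const, nsmul_eq_mul,
                Finset.card_powerset]
              push_cast
              ring
          _ ≤ ∑ S' ∈ F'.powerset, (matchNum (T ∪ S') : ℝ) := Finset.sum_le_sum hkey
      -- count of nonempty T
      have hcount : ∑ T ∈ δ.powerset, (if T = ∅ then (0:ℝ) else 1)
          = 2 ^ Y.card - 1 := by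
        have h1 : ∀ T ∈ δ.powerset, (if T = ∅ then (0:ℝ) else 1)
            = 1 - (if T = ∅ then (1:ℝ) else 0) := by
          intro T _; by_cases h : T = ∅ <;> simp [h]
        rw [Finset.sum_congr rfl h1, Finset.sum_sub_distrib, Finset.sum_const, nsmul_eq_mul,
          Finset.card_powerset, hδcard, Finset.sum_ite_eq' δ.powerset ∅ (fun _ => (1:ℝ)),
          if_pos (Finset.mem_powerset.2 (Finset.empty_subset δ))]
        push_cast
        ring
      -- cardinality of the union
      have hcards : (bip X Y).card = (r' + 1) + F'.card := by
        rw [hdec, Finset.card_union_of_disjoint hδF', hδcard, hYr]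
      -- algebraic identity
      have hvw : (1/2 : ℝ) ^ r' * 2 ^ r' = 1 := by
        rw [← mul_pow]; norm_num
      have key_alg : ((q' + 1 : ℝ) - 2 ^ (q' + 1) * (1/2) ^ (r' + 1) + (1/2) ^ (r' + 1))
            * 2 ^ ((r' + 1) + F'.card)
          = ((2:ℝ) ^ (r' + 1) - 1) * 2 ^ F'.card + 2 ^ (r' + 1) * (L' * 2 ^ F'.card) := by
        rw [hL', pow_add]
        push_cast
        linear_combination (-(2:ℝ) ^ F'.card) * hvw
      calc (((min X.card Y.card : ℕ) : ℝ) - 2 ^ (min X.card Y.card) * (1/2 : ℝ) ^ Y.card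
            + (1/2) ^ Y.card) * 2 ^ (bip X Y).card
          = ((q' + 1 : ℝ) - 2 ^ (q' + 1) * (1/2) ^ (r' + 1) + (1/2) ^ (r' + 1))
            * 2 ^ ((r' + 1) + F'.card) := by
            rw [hX, hq, hYr, hcards]
            push_cast
            ring
        _ = ((2:ℝ) ^ (r' + 1) - 1) * 2 ^ F'.card + 2 ^ (r' + 1) * (L' * 2 ^ F'.card) := key_alg
        _ = ∑ T ∈ δ.powerset, ((if T = ∅ then (0:ℝ) else 1) * 2 ^ F'.card
              + L' * 2 ^ F'.card) := by
            rw [Finset.sum_add_distrib, ← Finset.sum_mul, hcount, Finset.sum_const,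
              nsmul_eq_mul, Finset.card_powerset, hδcard, hYr]
            push_cast
            ring
        _ ≤ ∑ T ∈ δ.powerset, ∑ S' ∈ F'.powerset, (matchNum (T ∪ S') : ℝ) :=
            Finset.sum_le_sum main
        _ = ∑ S ∈ (bip X Y).powerset, (matchNum S : ℝ) := by
            rw [hdec, sum_powerset_union' hδF']

lemma hex_core : ∀ s : Finset (Fin 6), (∀ j : Fin 6, ¬(j ∈ s ∧ j + 1 ∈ s)) →
    s.card ≤ 3 ∧ (s.card = 3 → s = {0, 2, 4} ∨ s = {1, 3, 5}) := by decide

lemma pair_eq_iff {a b c d : V} (h : ({a, b} : Finset V) = {c, d}) :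
    (a = c ∧ b = d) ∨ (a = d ∧ b = c) := by
  have ha : a ∈ ({c, d} : Finset V) := h ▸ (by simp)
  have hb : b ∈ ({c, d} : Finset V) := h ▸ (by simp)
  have hc : c ∈ ({a, b} : Finset V) := h.symm ▸ (by simp)
  have hd : d ∈ ({a, b} : Finset V) := h.symm ▸ (by simp)
  simp only [Finset.mem_insert, Finset.mem_singleton] at ha hb hc hd
  rcases ha with rfl | rfl
  · rcases hb with rfl | rfl
    · rcases hd with hd | hd
      · exact Or.inl ⟨rfl, hd.symm⟩
      · exact Or.inl ⟨rfl, hd.symm⟩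
    · exact Or.inl ⟨rfl, rfl⟩
  · rcases hb with rfl | rfl
    · exact Or.inr ⟨rfl, rfl⟩
    · rcases hc with hc | hc
      · exact Or.inr ⟨rfl, hc.symm⟩
      · exact Or.inr ⟨rfl, hc.symm⟩

lemma hexagon {v : Fin 6 → V} (hv : Function.Injective v) {M : Finset (Finset V)}
    (hM : M ⊆ (Finset.univ : Finset (Fin 6)).image (fun j => ({v j, v (j + 1)} : Finset V)))
    (hm : ∀ e ∈ M, ∀ f ∈ M, e ≠ f → e ∩ f = ∅) :
    M.card ≤ 2 + (if ∀ j ∈ ({0, 2, 4} : Finset (Fin 6)), ({v j, v (j+1)} : Finset V) ∈ M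
        then 1 else 0)
      + (if ∀ j ∈ ({1, 3, 5} : Finset (Fin 6)), ({v j, v (j+1)} : Finset V) ∈ M
        then 1 else 0) := by
  have hcinj : Function.Injective (fun j : Fin 6 => ({v j, v (j + 1)} : Finset V)) := by
    intro a b hab
    simp only at hab
    rcases pair_eq_iff hab with ⟨h1, _⟩ | ⟨h1, h2⟩
    · exact hv h1
    · exfalso
      have e1 : a = b + 1 := hv h1
      have e2 : a + 1 = b := hv h2
      rw [← e2] at e1
      exact absurd e1 ((by decide : ∀ x : Fin 6, ¬ x = x + 1 + 1) a)
  set s : Finset (Fin 6) := Finset.univ.filter (fun j => ({v j, v (j + 1)} : Finset V) ∈ M)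
    with hs
  have hMs : M = s.image (fun j => ({v j, v (j + 1)} : Finset V)) := by
    ext e
    simp only [hs, Finset.mem_image, Finset.mem_filter, Finset.mem_univ, true_and]
    constructor
    · intro he
      obtain ⟨j, _, rfl⟩ := Finset.mem_image.1 (hM he)
      exact ⟨j, he, rfl⟩
    · rintro ⟨j, hj, rfl⟩
      exact hj
  have hcard : M.card = s.card := by rw [hMs, Finset.card_image_of_injective _ hcinj]
  have hadj : ∀ j : Fin 6, ¬(j ∈ s ∧ j + 1 ∈ s) := by
    rintro j ⟨hj, hj1⟩
    simp only [hs, Finset.mem_filter, Finset.mem_univ, true_and] at hj hj1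
    have hne : ({v j, v (j + 1)} : Finset V) ≠ {v (j + 1), v (j + 1 + 1)} := by
      intro h
      exact absurd (hcinj h) ((by decide : ∀ x : Fin 6, ¬ x = x + 1) j)
    have := hm _ hj _ hj1 hne
    have hmem : v (j + 1) ∈ ({v j, v (j + 1)} : Finset V) ∩ {v (j + 1), v (j + 1 + 1)} := by
      simp
    rw [this] at hmem
    exact Finset.notMem_empty _ hmem
  obtain ⟨h3, heq⟩ := hex_core s hadj
  rcases Nat.lt_or_ge s.card 3 with hlt | hge
  · have : M.card ≤ 2 := by omega
    have i1 : (0:ℕ) ≤ (if ∀ j ∈ ({0, 2, 4} : Finset (Fin 6)),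
        ({v j, v (j+1)} : Finset V) ∈ M then 1 else 0) := by positivity
    have i2 : (0:ℕ) ≤ (if ∀ j ∈ ({1, 3, 5} : Finset (Fin 6)),
        ({v j, v (j+1)} : Finset V) ∈ M then 1 else 0) := by positivity
    omega
  · have h3' : s.card = 3 := by omega
    rcases heq h3' with hseq | hseq
    · have hsub : ∀ j ∈ ({0, 2, 4} : Finset (Fin 6)), ({v j, v (j+1)} : Finset V) ∈ M := by
        intro j hj
        have : j ∈ s := by rw [hseq]; exact hj
        simpa [hs] using this
      rw [if_pos hsub]
      omega
    · have hsub : ∀ j ∈ ({1, 3, 5} : Finset (Fin 6)), ({v j, v (j+1)} : Finset V) ∈ M := by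
        intro j hj
        have : j ∈ s := by rw [hseq]; exact hj
        simpa [hs] using this
      rw [if_pos hsub]
      omega

end Generic3

def cyc (m : ℕ) (i : Fin m) : Fin 6 → Vt m := fun j =>
  match j with
  | 0 => Sum.inl (Sum.inl i)
  | 1 => Sum.inl (Sum.inr (Fin.castAdd m i))
  | 2 => Sum.inr (Sum.inl (Fin.castAdd m i))
  | 3 => Sum.inr (Sum.inr i)
  | 4 => Sum.inr (Sum.inl (Fin.natAdd m i))
  | 5 => Sum.inl (Sum.inr (Fin.natAdd m i))

def cycE (m : ℕ) (i : Fin m) : Finset (Finset (Vt m)) :=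
  (Finset.univ : Finset (Fin 6)).image (fun j => ({cyc m i j, cyc m i (j + 1)} : Finset (Vt m)))

lemma cyc_eq_iff {m : ℕ} {i i' : Fin m} {a b : Fin 6} :
    cyc m i a = cyc m i' b ↔ (i = i' ∧ a = b) := by
  constructor
  · intro h
    fin_cases a <;> fin_cases b <;>
      simp_all [cyc, Fin.ext_iff] <;> omega
  · rintro ⟨rfl, rfl⟩; rfl

lemma cyc_injective (m : ℕ) (i : Fin m) : Function.Injective (cyc m i) :=
  fun a b h => (cyc_eq_iff.1 h).2

lemma Wq_eq_biUnion (m : ℕ) :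
    Wq m = Finset.univ.biUnion (fun i : Fin m => cycE m i) := by
  ext e
  simp only [Wq, cycE, Finset.mem_biUnion, Finset.mem_union, Finset.mem_image, Finset.mem_univ,
    true_and]
  constructor
  · rintro ((((⟨j, rfl⟩ | ⟨i, rfl⟩) | ⟨i, rfl⟩) | ⟨i, rfl⟩) | ⟨i, rfl⟩)
    · by_cases h : j.val < m
      · obtain ⟨i', rfl⟩ : ∃ i' : Fin m, j = Fin.castAdd m i' := ⟨⟨j.val, h⟩, Fin.ext rfl⟩
        exact ⟨i', 1, rfl⟩
      · obtain ⟨i', rfl⟩ : ∃ i' : Fin m, j = Fin.natAdd m i' :=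
          ⟨⟨j.val - m, by omega⟩, Fin.ext (by simp [Fin.natAdd]; omega)⟩
        refine ⟨i', 4, ?_⟩
        rw [Finset.pair_comm]; rfl
    · exact ⟨i, 0, rfl⟩
    · refine ⟨i, 5, ?_⟩
      rw [Finset.pair_comm]; rfl
    · exact ⟨i, 2, rfl⟩
    · refine ⟨i, 3, ?_⟩
      rw [Finset.pair_comm]; rfl
  · rintro ⟨i, j, rfl⟩
    fin_cases j
    · exact Or.inl (Or.inl (Or.inl (Or.inr ⟨i, rfl⟩)))
    · exact Or.inl (Or.inl (Or.inl (Or.inl ⟨Fin.castAdd m i, rfl⟩)))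
    · exact Or.inl (Or.inr ⟨i, rfl⟩)
    · refine Or.inr ⟨i, ?_⟩
      rw [Finset.pair_comm]; rfl
    · exact Or.inl (Or.inl (Or.inl (Or.inl ⟨Fin.natAdd m i, by rw [Finset.pair_comm]; rfl⟩)))
    · exact Or.inl (Or.inl (Or.inr ⟨i, by rw [Finset.pair_comm]; rfl⟩))

section PartII
variable {m : ℕ}

def cEdge (m : ℕ) (i : Fin m) (j : Fin 6) : Finset (Vt m) := {cyc m i j, cyc m i (j + 1)}

lemma cEdge_inj (m : ℕ) (i : Fin m) : Function.Injective (cEdge m i) := by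
  intro a b hab
  rcases pair_eq_iff hab with ⟨h1, _⟩ | ⟨h1, h2⟩
  · exact cyc_injective m i h1
  · exfalso
    have e1 : a = b + 1 := cyc_injective m i h1
    have e2 : a + 1 = b := cyc_injective m i h2
    rw [← e2] at e1
    exact absurd e1 ((by decide : ∀ x : Fin 6, ¬ x = x + 1 + 1) a)

lemma cEdge_mem_cycE (i : Fin m) (j : Fin 6) : cEdge m i j ∈ cycE m i :=
  Finset.mem_image.2 ⟨j, Finset.mem_univ _, rfl⟩

lemma cycE_subset_Wq (i : Fin m) : cycE m i ⊆ Wq m := by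
  rw [Wq_eq_biUnion]
  intro e he
  exact Finset.mem_biUnion.2 ⟨i, Finset.mem_univ _, he⟩

lemma cycE_disjoint {i i' : Fin m} (h : i ≠ i') : Disjoint (cycE m i) (cycE m i') := by
  rw [Finset.disjoint_left]
  rintro e he he'
  simp only [cycE, Finset.mem_image, Finset.mem_univ, true_and] at he he'
  obtain ⟨j, rfl⟩ := he
  obtain ⟨j', heq⟩ := he'
  rcases pair_eq_iff heq with ⟨h1, _⟩ | ⟨h1, _⟩ <;> exact h ((cyc_eq_iff.1 h1).1).symm

def PMa (m : ℕ) (i : Fin m) : Finset (Finset (Vt m)) := {cEdge m i 0, cEdge m i 2, cEdge m i 4}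
def PMb (m : ℕ) (i : Fin m) : Finset (Finset (Vt m)) := {cEdge m i 1, cEdge m i 3, cEdge m i 5}

lemma cEdge_ne {i : Fin m} {a b : Fin 6} (h : a ≠ b) : cEdge m i a ≠ cEdge m i b :=
  fun hc => h (cEdge_inj m i hc)

lemma PMa_card (i : Fin m) : (PMa m i).card = 3 := by
  rw [PMa, Finset.card_insert_of_notMem, Finset.card_insert_of_notMem, Finset.card_singleton]
  · simp only [Finset.mem_singleton]
    exact cEdge_ne (by decide)
  · simp only [Finset.mem_insert, Finset.mem_singleton]
    push_neg
    exact ⟨cEdge_ne (by decide), cEdge_ne (by decide)⟩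

lemma PMb_card (i : Fin m) : (PMb m i).card = 3 := by
  rw [PMb, Finset.card_insert_of_notMem, Finset.card_insert_of_notMem, Finset.card_singleton]
  · simp only [Finset.mem_singleton]
    exact cEdge_ne (by decide)
  · simp only [Finset.mem_insert, Finset.mem_singleton]
    push_neg
    exact ⟨cEdge_ne (by decide), cEdge_ne (by decide)⟩

lemma PMa_subset (i : Fin m) : PMa m i ⊆ Wq m := by
  intro e he
  simp only [PMa, Finset.mem_insert, Finset.mem_singleton] at he
  rcases he with rfl | rfl | rfl <;> exact cycE_subset_Wq i (cEdge_mem_cycE i _)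

lemma PMb_subset (i : Fin m) : PMb m i ⊆ Wq m := by
  intro e he
  simp only [PMb, Finset.mem_insert, Finset.mem_singleton] at he
  rcases he with rfl | rfl | rfl <;> exact cycE_subset_Wq i (cEdge_mem_cycE i _)

lemma matchNum_cyc_bound (S : Finset (Finset (Vt m))) (i : Fin m) :
    matchNum (S ∩ cycE m i)
      ≤ 2 + (if PMa m i ⊆ S then 1 else 0) + (if PMb m i ⊆ S then 1 else 0) := by
  apply matchNum_le
  intro M hM hm
  have hM2 : M ⊆ (Finset.univ : Finset (Fin 6)).image
      (fun j => ({cyc m i j, cyc m i (j + 1)} : Finset (Vt m))) :=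
    hM.trans Finset.inter_subset_right
  have hx := hexagon (cyc_injective m i) hM2 hm
  have hi1 : (if ∀ j ∈ ({0, 2, 4} : Finset (Fin 6)),
      ({cyc m i j, cyc m i (j+1)} : Finset (Vt m)) ∈ M then 1 else 0)
      ≤ (if PMa m i ⊆ S then 1 else 0) := by
    by_cases h : ∀ j ∈ ({0, 2, 4} : Finset (Fin 6)),
        ({cyc m i j, cyc m i (j+1)} : Finset (Vt m)) ∈ M
    · rw [if_pos h, if_pos]
      intro e he
      simp only [PMa, Finset.mem_insert, Finset.mem_singleton] at he
      rcases he with rfl | rfl | rfl <;>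
        exact (Finset.mem_inter.1 (hM (h _ (by decide)))).1
    · rw [if_neg h]
      exact Nat.zero_le _
  have hi2 : (if ∀ j ∈ ({1, 3, 5} : Finset (Fin 6)),
      ({cyc m i j, cyc m i (j+1)} : Finset (Vt m)) ∈ M then 1 else 0)
      ≤ (if PMb m i ⊆ S then 1 else 0) := by
    by_cases h : ∀ j ∈ ({1, 3, 5} : Finset (Fin 6)),
        ({cyc m i j, cyc m i (j+1)} : Finset (Vt m)) ∈ M
    · rw [if_pos h, if_pos]
      intro e he
      simp only [PMb, Finset.mem_insert, Finset.mem_singleton] at he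
      rcases he with rfl | rfl | rfl <;>
        exact (Finset.mem_inter.1 (hM (h _ (by decide)))).1
    · rw [if_neg h]
      exact Nat.zero_le _
  exact hx.trans (add_le_add (add_le_add le_rfl hi1) hi2)

lemma matchNum_Wq_bound {S : Finset (Finset (Vt m))} (hS : S ⊆ Wq m) :
    matchNum S ≤ ∑ i : Fin m,
      (2 + (if PMa m i ⊆ S then 1 else 0) + (if PMb m i ⊆ S then 1 else 0)) := by
  have step1 : matchNum S ≤ ∑ i : Fin m, matchNum (S ∩ cycE m i) := by
    apply matchNum_le
    intro M hMS hm
    have hMW : M ⊆ Finset.univ.biUnion (fun i : Fin m => cycE m i) := by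
      rw [← Wq_eq_biUnion]
      exact hMS.trans hS
    have hMeq : M = Finset.univ.biUnion (fun i : Fin m => M ∩ cycE m i) := by
      ext x
      simp only [Finset.mem_biUnion, Finset.mem_univ, true_and, Finset.mem_inter]
      constructor
      · intro hx
        obtain ⟨i, _, hi⟩ := Finset.mem_biUnion.1 (hMW hx)
        exact ⟨i, hx, hi⟩
      · rintro ⟨i, hx, _⟩
        exact hx
    have hcard : M.card = ∑ i : Fin m, (M ∩ cycE m i).card := by
      conv_lhs => rw [hMeq]
      apply Finset.card_biUnion
      intro i _ i' _ hne
      exact (cycE_disjoint hne).mono Finset.inter_subset_right Finset.inter_subset_right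
    rw [hcard]
    apply Finset.sum_le_sum
    intro i _
    apply le_matchNum (Finset.inter_subset_inter hMS Finset.Subset.rfl)
    intro e he f hf hef
    exact hm e (Finset.mem_inter.1 he).1 f (Finset.mem_inter.1 hf).1 hef
  exact step1.trans (Finset.sum_le_sum fun i _ => matchNum_cyc_bound S i)

end PartII

section Weights
variable {α : Type*} [DecidableEq α]

lemma half_pow_mul_pow_sub {N k : ℕ} (h : k ≤ N) : (1/2:ℝ)^N * 2^(N-k) = (1/2)^k := by
  have h2 : (2:ℝ)^(N-k) * 2^k = 2^N := pow_sub_mul_pow 2 h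
  have h1 : (1/2:ℝ)^N * 2^N = 1 := by rw [← mul_pow]; norm_num
  have hk : (1/2:ℝ)^k * 2^k = 1 := by rw [← mul_pow]; norm_num
  have hpos : (0:ℝ) < 2^k := by positivity
  apply mul_right_cancel₀ (ne_of_gt hpos)
  rw [mul_assoc, h2, h1, hk]

lemma sum_half_pow_powerset (G : Finset α) : ∑ S ∈ G.powerset, (1/2:ℝ)^G.card = 1 := by
  rw [Finset.sum_const, Finset.card_powerset, nsmul_eq_mul]
  push_cast
  rw [← mul_pow]
  norm_num

lemma sum_weight_ite {G T : Finset α} (hT : T ⊆ G) :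
    ∑ S ∈ G.powerset, (1/2:ℝ)^G.card * (if T ⊆ S then 1 else 0)
      = (1/2:ℝ)^T.card := by
  rw [← Finset.mul_sum, Finset.sum_boole, card_powerset_filter_supset hT]
  push_cast
  rw [half_pow_mul_pow_sub (Finset.card_le_card hT)]

lemma weight_eq {G S : Finset α} (hS : S ∈ G.powerset) :
    (1/2:ℝ)^S.card * (1 - 1/2)^(G.card - S.card) = (1/2)^G.card := by
  rw [show (1 - 1/2 : ℝ) = 1/2 by norm_num, ← pow_add,
    Nat.add_sub_cancel' (Finset.card_le_card (Finset.mem_powerset.1 hS))]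

end Weights

lemma expMatch_Wq_le (m : ℕ) : expMatch (Wq m) (1/2 : ℝ) ≤ (9/4 : ℝ) * m := by
  have hstep : expMatch (Wq m) (1/2 : ℝ)
      ≤ ∑ i : Fin m, ∑ S ∈ (Wq m).powerset, ((1/2:ℝ)^(Wq m).card * 2
        + (1/2:ℝ)^(Wq m).card * (if PMa m i ⊆ S then 1 else 0)
        + (1/2:ℝ)^(Wq m).card * (if PMb m i ⊆ S then 1 else 0)) := by
    rw [Finset.sum_comm]
    unfold expMatch
    apply Finset.sum_le_sum
    intro S hS
    rw [weight_eq hS]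
    have hb := matchNum_Wq_bound (Finset.mem_powerset.1 hS)
    calc (1/2:ℝ)^(Wq m).card * (matchNum S : ℝ)
        ≤ (1/2:ℝ)^(Wq m).card * (∑ i : Fin m,
            ((2:ℝ) + (if PMa m i ⊆ S then 1 else 0) + (if PMb m i ⊆ S then 1 else 0))) := by
          apply mul_le_mul_of_nonneg_left _ (by positivity)
          calc (matchNum S : ℝ) ≤ ((∑ i : Fin m,
              (2 + (if PMa m i ⊆ S then 1 else 0) + (if PMb m i ⊆ S then 1 else 0)) : ℕ) : ℝ) :=
                Nat.cast_le.2 hb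
            _ = _ := by push_cast [apply_ite (Nat.cast : ℕ → ℝ)]; ring
      _ = ∑ i : Fin m, ((1/2:ℝ)^(Wq m).card * 2
          + (1/2:ℝ)^(Wq m).card * (if PMa m i ⊆ S then 1 else 0)
          + (1/2:ℝ)^(Wq m).card * (if PMb m i ⊆ S then 1 else 0)) := by
          rw [Finset.mul_sum]
          apply Finset.sum_congr rfl
          intro i _
          ring
  refine hstep.trans ?_
  have hper : ∀ i : Fin m, ∑ S ∈ (Wq m).powerset, ((1/2:ℝ)^(Wq m).card * 2
      + (1/2:ℝ)^(Wq m).card * (if PMa m i ⊆ S then 1 else 0)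
      + (1/2:ℝ)^(Wq m).card * (if PMb m i ⊆ S then 1 else 0)) = 9/4 := by
    intro i
    rw [Finset.sum_add_distrib, Finset.sum_add_distrib]
    rw [sum_weight_ite (PMa_subset i), sum_weight_ite (PMb_subset i), PMa_card, PMb_card]
    have : ∑ S ∈ (Wq m).powerset, (1/2:ℝ)^(Wq m).card * 2
        = 2 := by
      rw [← Finset.sum_mul, sum_half_pow_powerset]
      norm_num
    rw [this]
    norm_num
  rw [Finset.sum_congr rfl (fun i _ => hper i), Finset.sum_const]
  simp [mul_comm]

section PartI
variable {m : ℕ}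

lemma mem_cEdge_iff {i i' : Fin m} {a j : Fin 6} :
    cyc m i a ∈ cEdge m i' j ↔ i = i' ∧ (a = j ∨ a = j + 1) := by
  simp only [cEdge, Finset.mem_insert, Finset.mem_singleton, cyc_eq_iff]
  tauto

lemma filter_mem_Wq (i : Fin m) (a : Fin 6) :
    (Wq m).filter (fun e => cyc m i a ∈ e) = {cEdge m i (a - 1), cEdge m i a} := by
  ext e
  simp only [Finset.mem_filter, Finset.mem_insert, Finset.mem_singleton]
  constructor
  · rintro ⟨hW, hv⟩
    rw [Wq_eq_biUnion] at hW
    obtain ⟨i', _, hE⟩ := Finset.mem_biUnion.1 hW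
    simp only [cycE, Finset.mem_image, Finset.mem_univ, true_and] at hE
    obtain ⟨j, rfl⟩ := hE
    have hm := mem_cEdge_iff.1 (show cyc m i a ∈ cEdge m i' j from hv)
    obtain ⟨rfl, haj⟩ := hm
    rcases haj with rfl | rfl
    · exact Or.inr rfl
    · refine Or.inl ?_
      rw [show j + 1 - 1 = j from (by decide : ∀ x : Fin 6, x + 1 - 1 = x) j]
      rfl
  · rintro (rfl | rfl)
    constructor
    · exact cycE_subset_Wq i (cEdge_mem_cycE i _)
    · rw [mem_cEdge_iff]
      exact ⟨rfl, Or.inr ((by decide : ∀ x : Fin 6, x = x - 1 + 1) a)⟩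
    constructor
    · exact cycE_subset_Wq i (cEdge_mem_cycE i _)
    · rw [mem_cEdge_iff]
      exact ⟨rfl, Or.inl rfl⟩

lemma deg_two (i : Fin m) (a : Fin 6) :
    ((Wq m).filter (fun e => cyc m i a ∈ e)).card = 2 := by
  rw [filter_mem_Wq, Finset.card_insert_of_notMem, Finset.card_singleton]
  simp only [Finset.mem_singleton]
  exact cEdge_ne ((by decide : ∀ x : Fin 6, x - 1 ≠ x) a)

lemma B2C2_deg {v : Vt m} (hv : v ∈ B2C2 m) :
    ((Wq m).filter (fun e => v ∈ e)).card = 2 := by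
  simp only [B2C2, Finset.mem_union, Finset.mem_image, Finset.mem_univ, true_and] at hv
  rcases hv with ⟨i, rfl⟩ | ⟨i, rfl⟩
  · exact deg_two i 5
  · exact deg_two i 4

lemma B2C2_card : (B2C2 m).card = m + m := by
  rw [B2C2, Finset.card_union_of_disjoint]
  · rw [Finset.card_image_of_injective, Finset.card_image_of_injective, Finset.card_univ,
      Fintype.card_fin]
    · intro a b h
      simp only [Sum.inr.injEq, Sum.inl.injEq] at h
      exact Fin.ext (by have := Fin.val_eq_of_eq h; simp [Fin.natAdd] at this ⊢; omega)
    · intro a b h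
      simp only [Sum.inr.injEq, Sum.inl.injEq] at h
      exact Fin.ext (by have := Fin.val_eq_of_eq h; simp [Fin.natAdd] at this ⊢; omega)
  · rw [Finset.disjoint_left]
    rintro v hv hv'
    simp only [Finset.mem_image, Finset.mem_univ, true_and] at hv hv'
    obtain ⟨a, rfl⟩ := hv
    obtain ⟨b, hb⟩ := hv'
    exact absurd hb (by simp)

lemma part_i (m : ℕ) :
    ((m : ℝ) + m) / 4 ≤
      ∑ S ∈ (Wq m).powerset,
        (1 / 2 : ℝ) ^ S.card * (1 / 2) ^ ((Wq m).card - S.card) *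
          (((B2C2 m).filter (fun v => ∀ e ∈ S, v ∉ e)).card : ℝ) := by
  have hw : ∀ S ∈ (Wq m).powerset,
      (1 / 2 : ℝ) ^ S.card * (1 / 2) ^ ((Wq m).card - S.card) *
          (((B2C2 m).filter (fun v => ∀ e ∈ S, v ∉ e)).card : ℝ)
        = ∑ v ∈ B2C2 m, (1/2:ℝ)^(Wq m).card * (if ∀ e ∈ S, v ∉ e then 1 else 0) := by
    intro S hS
    rw [← pow_add, Nat.add_sub_cancel' (Finset.card_le_card (Finset.mem_powerset.1 hS)),
      ← Finset.mul_sum]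
    congr 1
    convert (Finset.natCast_card_filter (R := ℝ) (fun v => ∀ e ∈ S, v ∉ e) (B2C2 m))
  rw [Finset.sum_congr rfl hw, Finset.sum_comm]
  have hv : ∀ v ∈ B2C2 m,
      ∑ S ∈ (Wq m).powerset, (1/2:ℝ)^(Wq m).card * (if ∀ e ∈ S, v ∉ e then 1 else 0)
        = 1/4 := by
    intro v hvm
    have hps : (Wq m).powerset.filter (fun S => ∀ e ∈ S, v ∉ e)
        = ((Wq m).filter (fun e => v ∉ e)).powerset := by
      ext S
      simp only [Finset.mem_filter, Finset.mem_powerset]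
      constructor
      · rintro ⟨h1, h2⟩ x hx
        exact Finset.mem_filter.2 ⟨h1 hx, h2 x hx⟩
      · intro h
        exact ⟨fun x hx => (Finset.mem_filter.1 (h hx)).1,
          fun e he => (Finset.mem_filter.1 (h he)).2⟩
    rw [← Finset.mul_sum, Finset.sum_boole (fun S => ∀ e ∈ S, v ∉ e), hps, Finset.card_powerset]
    have hdeg := B2C2_deg hvm
    have hsplit := Finset.card_filter_add_card_filter_not
      (s := Wq m) (p := fun e => v ∈ e)
    have h2N : 2 ≤ (Wq m).card := by
      rw [← hdeg]
      exact Finset.card_le_card (Finset.filter_subset _ _)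
    have hcard : ((Wq m).filter (fun e => v ∉ e)).card = (Wq m).card - 2 := by
      have : ((Wq m).filter (fun e => ¬ (v ∈ e))).card = (Wq m).card - 2 := by omega
      exact this
    rw [hcard]
    push_cast
    rw [half_pow_mul_pow_sub h2N]
    norm_num
  rw [Finset.sum_congr rfl hv, Finset.sum_const, B2C2_card]
  push_cast
  rw [nsmul_eq_mul]
  push_cast
  ring_nf
  norm_num [le_refl]

section PartIII
variable {m : ℕ}

def eMatch (m : ℕ) (j : Fin (m + m)) : Finset (Vt m) :=
  {Sum.inl (Sum.inr j), Sum.inr (Sum.inl j)}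

def Mset (m : ℕ) : Finset (Finset (Vt m)) := Finset.univ.image (eMatch m)

def ABset (m : ℕ) : Finset (Finset (Vt m)) :=
  Finset.univ.image fun q : Fin m × Fin (m + m) =>
    ({Sum.inl (Sum.inl q.1), Sum.inl (Sum.inr q.2)} : Finset (Vt m))

def CDset (m : ℕ) : Finset (Finset (Vt m)) :=
  Finset.univ.image fun q : Fin (m + m) × Fin m =>
    ({Sum.inr (Sum.inl q.1), Sum.inr (Sum.inr q.2)} : Finset (Vt m))

lemma graphE_eq (m : ℕ) : graphE m = (Mset m ∪ ABset m) ∪ CDset m := rfl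

lemma eMatch_inj (m : ℕ) : Function.Injective (eMatch m) := by
  intro a b h
  rcases pair_eq_iff h with ⟨h1, _⟩ | ⟨h1, _⟩
  · simpa using h1
  · exact absurd h1 (by simp)

lemma Mset_card (m : ℕ) : (Mset m).card = m + m := by
  rw [Mset, Finset.card_image_of_injective _ (eMatch_inj m), Finset.card_univ, Fintype.card_fin]

def XA (m : ℕ) : Finset (Vt m) := Finset.univ.image (fun i : Fin m => Sum.inl (Sum.inl i))
def XD (m : ℕ) : Finset (Vt m) := Finset.univ.image (fun i : Fin m => Sum.inr (Sum.inr i))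
def freeJ (m : ℕ) (P : Finset (Finset (Vt m))) : Finset (Fin (m + m)) :=
  Finset.univ.filter (fun j => eMatch m j ∉ P)
def YB (m : ℕ) (P : Finset (Finset (Vt m))) : Finset (Vt m) :=
  (freeJ m P).image (fun j => Sum.inl (Sum.inr j))
def YC (m : ℕ) (P : Finset (Finset (Vt m))) : Finset (Vt m) :=
  (freeJ m P).image (fun j => Sum.inr (Sum.inl j))

lemma XA_card (m : ℕ) : (XA m).card = m := by
  rw [XA, Finset.card_image_of_injective, Finset.card_univ, Fintype.card_fin]
  intro a b h; simpa using h

lemma XD_card (m : ℕ) : (XD m).card = m := by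
  rw [XD, Finset.card_image_of_injective, Finset.card_univ, Fintype.card_fin]
  intro a b h; simpa using h

lemma freeJ_card {P : Finset (Finset (Vt m))} (hP : P ⊆ Mset m) :
    (freeJ m P).card = (m + m) - P.card := by
  have hPcard : (Finset.univ.filter (fun j => eMatch m j ∈ P)).card = P.card := by
    have hPim : P = (Finset.univ.filter (fun j => eMatch m j ∈ P)).image (eMatch m) := by
      ext e
      simp only [Finset.mem_image, Finset.mem_filter, Finset.mem_univ, true_and]
      constructor
      · intro he
        obtain ⟨j, _, rfl⟩ := Finset.mem_image.1 (hP he)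
        exact ⟨j, he, rfl⟩
      · rintro ⟨j, hj, rfl⟩; exact hj
    conv_rhs => rw [hPim]
    rw [Finset.card_image_of_injective _ (eMatch_inj m)]
  have := Finset.card_filter_add_card_filter_not
    (s := (Finset.univ : Finset (Fin (m + m)))) (p := fun j => eMatch m j ∈ P)
  rw [Finset.card_univ, Fintype.card_fin] at this
  have h2 : (Finset.univ.filter (fun j => ¬ eMatch m j ∈ P)).card = (m + m) - P.card := by omega
  exact h2

lemma YB_card {P : Finset (Finset (Vt m))} (hP : P ⊆ Mset m) :
    (YB m P).card = (m + m) - P.card := by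
  rw [YB, Finset.card_image_of_injective, freeJ_card hP]
  intro a b h; simpa using h

lemma YC_card {P : Finset (Finset (Vt m))} (hP : P ⊆ Mset m) :
    (YC m P).card = (m + m) - P.card := by
  rw [YC, Finset.card_image_of_injective, freeJ_card hP]
  intro a b h; simpa using h

lemma XA_YB_disj (P : Finset (Finset (Vt m))) : Disjoint (XA m) (YB m P) := by
  rw [Finset.disjoint_left]
  rintro v hv hv'
  simp only [XA, YB, Finset.mem_image, Finset.mem_univ, true_and] at hv hv'
  obtain ⟨a, rfl⟩ := hv
  obtain ⟨b, _, hb⟩ := hv'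
  exact absurd hb (by simp)

lemma XD_YC_disj (P : Finset (Finset (Vt m))) : Disjoint (XD m) (YC m P) := by
  rw [Finset.disjoint_left]
  rintro v hv hv'
  simp only [XD, YC, Finset.mem_image, Finset.mem_univ, true_and] at hv hv'
  obtain ⟨a, rfl⟩ := hv
  obtain ⟨b, _, hb⟩ := hv'
  exact absurd hb (by simp)

lemma bipA_subset (P : Finset (Finset (Vt m))) : bip (XA m) (YB m P) ⊆ ABset m := by
  intro e he
  obtain ⟨x, hx, y, hy, rfl⟩ := mem_bip.1 he
  simp only [XA, YB, Finset.mem_image, Finset.mem_univ, true_and] at hx hy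
  obtain ⟨a, rfl⟩ := hx
  obtain ⟨j, _, rfl⟩ := hy
  exact Finset.mem_image.2 ⟨(a, j), Finset.mem_univ _, rfl⟩

lemma bipD_subset (P : Finset (Finset (Vt m))) : bip (XD m) (YC m P) ⊆ CDset m := by
  intro e he
  obtain ⟨x, hx, y, hy, rfl⟩ := mem_bip.1 he
  simp only [XD, YC, Finset.mem_image, Finset.mem_univ, true_and] at hx hy
  obtain ⟨a, rfl⟩ := hx
  obtain ⟨j, _, rfl⟩ := hy
  refine Finset.mem_image.2 ⟨(j, a), Finset.mem_univ _, ?_⟩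
  rw [Finset.pair_comm]

lemma low {P U W : Finset (Finset (Vt m))} (hP : P ⊆ Mset m) :
    P.card + matchNum (U ∩ bip (XA m) (YB m P)) + matchNum (W ∩ bip (XD m) (YC m P))
      ≤ matchNum (P ∪ U ∪ W) := by
  -- structure of members
  have hmemP : ∀ e ∈ P, ∃ j : Fin (m + m), e = eMatch m j ∧ eMatch m j ∈ P := by
    intro e he
    obtain ⟨j, _, rfl⟩ := Finset.mem_image.1 (hP he)
    exact ⟨j, rfl, he⟩
  have hmem2 : ∀ f ∈ U ∩ bip (XA m) (YB m P), ∃ (a : Fin m) (j : Fin (m + m)),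
      f = {Sum.inl (Sum.inl a), Sum.inl (Sum.inr j)} ∧ eMatch m j ∉ P := by
    intro f hf
    obtain ⟨x, hx, y, hy, rfl⟩ := mem_bip.1 (Finset.mem_inter.1 hf).2
    simp only [XA, YB, freeJ, Finset.mem_image, Finset.mem_filter, Finset.mem_univ,
      true_and] at hx hy
    obtain ⟨a, rfl⟩ := hx
    obtain ⟨j, hj, rfl⟩ := hy
    exact ⟨a, j, rfl, hj⟩
  have hmem3 : ∀ f ∈ W ∩ bip (XD m) (YC m P), ∃ (a : Fin m) (j : Fin (m + m)),
      f = {Sum.inr (Sum.inr a), Sum.inr (Sum.inl j)} ∧ eMatch m j ∉ P := by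
    intro f hf
    obtain ⟨x, hx, y, hy, rfl⟩ := mem_bip.1 (Finset.mem_inter.1 hf).2
    simp only [XD, YC, freeJ, Finset.mem_image, Finset.mem_filter, Finset.mem_univ,
      true_and] at hx hy
    obtain ⟨a, rfl⟩ := hx
    obtain ⟨j, hj, rfl⟩ := hy
    exact ⟨a, j, rfl, hj⟩
  have hcardP : P.card ≤ matchNum P := by
    apply le_matchNum Finset.Subset.rfl
    intro e he f hf hef
    obtain ⟨j, rfl, _⟩ := hmemP e he
    obtain ⟨j', rfl, _⟩ := hmemP f hf
    have hjj : j ≠ j' := fun h => hef (by rw [h])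
    exact pair_inter_empty (by simp [hjj]) (by simp) (by simp) (by simp [hjj])
  have hd12 : ∀ e ∈ P, ∀ f ∈ U ∩ bip (XA m) (YB m P), e ∩ f = ∅ := by
    intro e he f hf
    obtain ⟨j, rfl, hjP⟩ := hmemP e he
    obtain ⟨a, j', rfl, hj'⟩ := hmem2 f hf
    have hjj : j ≠ j' := fun h => hj' (h ▸ hjP)
    exact pair_inter_empty (by simp) (by simp [hjj]) (by simp) (by simp)
  have hd13 : ∀ e ∈ P, ∀ f ∈ W ∩ bip (XD m) (YC m P), e ∩ f = ∅ := by
    intro e he f hf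
    obtain ⟨j, rfl, hjP⟩ := hmemP e he
    obtain ⟨a, j', rfl, hj'⟩ := hmem3 f hf
    have hjj : j ≠ j' := fun h => hj' (h ▸ hjP)
    exact pair_inter_empty (by simp) (by simp) (by simp) (by simp [hjj])
  have hd23 : ∀ e ∈ U ∩ bip (XA m) (YB m P), ∀ f ∈ W ∩ bip (XD m) (YC m P), e ∩ f = ∅ := by
    intro e he f hf
    obtain ⟨a, j, rfl, _⟩ := hmem2 e he
    obtain ⟨a', j', rfl, _⟩ := hmem3 f hf
    exact pair_inter_empty (by simp) (by simp) (by simp) (by simp)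
  have hne1 : ∀ e ∈ P, e.Nonempty := by
    intro e he
    obtain ⟨j, rfl, _⟩ := hmemP e he
    exact ⟨Sum.inl (Sum.inr j), by simp [eMatch]⟩
  have hne2 : ∀ e ∈ U ∩ bip (XA m) (YB m P), e.Nonempty := by
    intro e he
    obtain ⟨a, j, rfl, _⟩ := hmem2 e he
    exact ⟨Sum.inl (Sum.inl a), by simp⟩
  have step1 : P.card + matchNum (U ∩ bip (XA m) (YB m P))
      ≤ matchNum (P ∪ (U ∩ bip (XA m) (YB m P))) :=
    le_trans (Nat.add_le_add_right hcardP _) (matchNum_union_ge hne1 hd12)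
  have step2 : matchNum (P ∪ (U ∩ bip (XA m) (YB m P))) + matchNum (W ∩ bip (XD m) (YC m P))
      ≤ matchNum ((P ∪ (U ∩ bip (XA m) (YB m P))) ∪ (W ∩ bip (XD m) (YC m P))) := by
    apply matchNum_union_ge
    · intro e he
      rcases Finset.mem_union.1 he with he' | he'
      · exact hne1 e he'
      · exact hne2 e he'
    · intro e he f hf
      rcases Finset.mem_union.1 he with he' | he'
      · exact hd13 e he' f hf
      · exact hd23 e he' f hf
  have step3 : matchNum ((P ∪ (U ∩ bip (XA m) (YB m P))) ∪ (W ∩ bip (XD m) (YC m P)))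
      ≤ matchNum (P ∪ U ∪ W) := by
    apply matchNum_mono
    apply Finset.union_subset
    · apply Finset.union_subset
      · exact (Finset.subset_union_left).trans Finset.subset_union_left
      · exact (Finset.inter_subset_left).trans
          ((Finset.subset_union_right).trans Finset.subset_union_left)
    · exact (Finset.inter_subset_left).trans Finset.subset_union_right
  omega

end PartIII

section PartIIIsum
variable {m : ℕ}

lemma sumU {P : Finset (Finset (Vt m))} (hP : P ⊆ Mset m) :
    (((min m ((m + m) - P.card) : ℕ) : ℝ) - 1) * 2 ^ (ABset m).card
      ≤ ∑ U ∈ (ABset m).powerset, (matchNum (U ∩ bip (XA m) (YB m P)) : ℝ) := by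
  rw [sum_powerset_inter (bipA_subset P) (fun u => (matchNum u : ℝ))]
  have hg := greedy m (XA m) (YB m P) (XA_card m) (XA_YB_disj P)
  rw [XA_card, YB_card hP] at hg
  have hq_le : min m ((m + m) - P.card) ≤ (m + m) - P.card := min_le_right _ _
  have hL : ((min m ((m + m) - P.card) : ℕ) : ℝ) - 1
      ≤ ((min m ((m + m) - P.card) : ℕ) : ℝ)
        - 2 ^ (min m ((m + m) - P.card)) * (1/2 : ℝ) ^ ((m + m) - P.card)
        + (1/2) ^ ((m + m) - P.card) := by
    have h2 : ((1:ℝ)/2) ^ ((m + m) - P.card) = ((2:ℝ) ^ ((m + m) - P.card))⁻¹ := by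
      rw [one_div, inv_pow]
    have h3 : (2:ℝ) ^ (min m ((m + m) - P.card)) ≤ 2 ^ ((m + m) - P.card) :=
      pow_le_pow_right₀ one_le_two hq_le
    have h1 : (2:ℝ) ^ (min m ((m + m) - P.card)) * (1/2) ^ ((m + m) - P.card) ≤ 1 := by
      rw [h2]
      calc (2:ℝ) ^ (min m ((m + m) - P.card)) * ((2:ℝ) ^ ((m + m) - P.card))⁻¹
          ≤ (2:ℝ) ^ ((m + m) - P.card) * ((2:ℝ) ^ ((m + m) - P.card))⁻¹ :=
            mul_le_mul_of_nonneg_right h3 (by positivity)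
        _ = 1 := mul_inv_cancel₀ (by positivity)
    have h0 : (0:ℝ) ≤ (1/2 : ℝ) ^ ((m + m) - P.card) := by positivity
    linarith
  have hle := Finset.card_le_card (bipA_subset P)
  have hbig : (((min m ((m + m) - P.card) : ℕ) : ℝ) - 1) * 2 ^ (bip (XA m) (YB m P)).card
      ≤ ∑ u ∈ (bip (XA m) (YB m P)).powerset, (matchNum u : ℝ) :=
    le_trans (mul_le_mul_of_nonneg_right hL (by positivity)) hg
  calc (((min m ((m + m) - P.card) : ℕ) : ℝ) - 1) * 2 ^ (ABset m).card
      = 2 ^ ((ABset m).card - (bip (XA m) (YB m P)).card)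
        * ((((min m ((m + m) - P.card) : ℕ) : ℝ) - 1) * 2 ^ (bip (XA m) (YB m P)).card) := by
        rw [← mul_assoc, mul_comm ((2:ℝ) ^ ((ABset m).card - (bip (XA m) (YB m P)).card)) _,
          mul_assoc, pow_sub_mul_pow (2:ℝ) hle]
    _ ≤ _ := mul_le_mul_of_nonneg_left hbig (by positivity)

lemma sumW {P : Finset (Finset (Vt m))} (hP : P ⊆ Mset m) :
    (((min m ((m + m) - P.card) : ℕ) : ℝ) - 1) * 2 ^ (CDset m).card
      ≤ ∑ W ∈ (CDset m).powerset, (matchNum (W ∩ bip (XD m) (YC m P)) : ℝ) := by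
  rw [sum_powerset_inter (bipD_subset P) (fun u => (matchNum u : ℝ))]
  have hg := greedy m (XD m) (YC m P) (XD_card m) (XD_YC_disj P)
  rw [XD_card, YC_card hP] at hg
  have hq_le : min m ((m + m) - P.card) ≤ (m + m) - P.card := min_le_right _ _
  have hL : ((min m ((m + m) - P.card) : ℕ) : ℝ) - 1
      ≤ ((min m ((m + m) - P.card) : ℕ) : ℝ)
        - 2 ^ (min m ((m + m) - P.card)) * (1/2 : ℝ) ^ ((m + m) - P.card)
        + (1/2) ^ ((m + m) - P.card) := by
    have h2 : ((1:ℝ)/2) ^ ((m + m) - P.card) = ((2:ℝ) ^ ((m + m) - P.card))⁻¹ := by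
      rw [one_div, inv_pow]
    have h3 : (2:ℝ) ^ (min m ((m + m) - P.card)) ≤ 2 ^ ((m + m) - P.card) :=
      pow_le_pow_right₀ one_le_two hq_le
    have h1 : (2:ℝ) ^ (min m ((m + m) - P.card)) * (1/2) ^ ((m + m) - P.card) ≤ 1 := by
      rw [h2]
      calc (2:ℝ) ^ (min m ((m + m) - P.card)) * ((2:ℝ) ^ ((m + m) - P.card))⁻¹
          ≤ (2:ℝ) ^ ((m + m) - P.card) * ((2:ℝ) ^ ((m + m) - P.card))⁻¹ :=
            mul_le_mul_of_nonneg_right h3 (by positivity)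
        _ = 1 := mul_inv_cancel₀ (by positivity)
    have h0 : (0:ℝ) ≤ (1/2 : ℝ) ^ ((m + m) - P.card) := by positivity
    linarith
  have hle := Finset.card_le_card (bipD_subset P)
  have hbig : (((min m ((m + m) - P.card) : ℕ) : ℝ) - 1) * 2 ^ (bip (XD m) (YC m P)).card
      ≤ ∑ u ∈ (bip (XD m) (YC m P)).powerset, (matchNum u : ℝ) :=
    le_trans (mul_le_mul_of_nonneg_right hL (by positivity)) hg
  calc (((min m ((m + m) - P.card) : ℕ) : ℝ) - 1) * 2 ^ (CDset m).card
      = 2 ^ ((CDset m).card - (bip (XD m) (YC m P)).card)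
        * ((((min m ((m + m) - P.card) : ℕ) : ℝ) - 1) * 2 ^ (bip (XD m) (YC m P)).card) := by
        rw [← mul_assoc, mul_comm ((2:ℝ) ^ ((CDset m).card - (bip (XD m) (YC m P)).card)) _,
          mul_assoc, pow_sub_mul_pow (2:ℝ) hle]
    _ ≤ _ := mul_le_mul_of_nonneg_left hbig (by positivity)

lemma inner_bound {P : Finset (Finset (Vt m))} (hP : P ⊆ Mset m) :
    ((P.card : ℝ) + 2 * ((min m ((m + m) - P.card) : ℕ) : ℝ) - 2)
        * (2 ^ (ABset m).card * 2 ^ (CDset m).card)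
      ≤ ∑ U ∈ (ABset m).powerset, ∑ W ∈ (CDset m).powerset, (matchNum (P ∪ U ∪ W) : ℝ) := by
  set q : ℝ := ((min m ((m + m) - P.card) : ℕ) : ℝ) with hq
  have perU : ∀ U ∈ (ABset m).powerset,
      ((P.card : ℝ) + (matchNum (U ∩ bip (XA m) (YB m P)) : ℝ) + (q - 1))
          * 2 ^ (CDset m).card
        ≤ ∑ W ∈ (CDset m).powerset, (matchNum (P ∪ U ∪ W) : ℝ) := by
    intro U _
    have hptwise : ∀ W ∈ (CDset m).powerset,
        ((P.card : ℝ) + (matchNum (U ∩ bip (XA m) (YB m P)) : ℝ))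
          + (matchNum (W ∩ bip (XD m) (YC m P)) : ℝ) ≤ (matchNum (P ∪ U ∪ W) : ℝ) := by
      intro W _
      exact_mod_cast low (U := U) (W := W) hP
    have h1 := sumW hP
    calc ((P.card : ℝ) + (matchNum (U ∩ bip (XA m) (YB m P)) : ℝ) + (q - 1))
          * 2 ^ (CDset m).card
        = ((P.card : ℝ) + (matchNum (U ∩ bip (XA m) (YB m P)) : ℝ)) * 2 ^ (CDset m).card
          + (q - 1) * 2 ^ (CDset m).card := by ring
      _ ≤ ((P.card : ℝ) + (matchNum (U ∩ bip (XA m) (YB m P)) : ℝ)) * 2 ^ (CDset m).card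
          + ∑ W ∈ (CDset m).powerset, (matchNum (W ∩ bip (XD m) (YC m P)) : ℝ) := by
          linarith
      _ = ∑ W ∈ (CDset m).powerset,
          (((P.card : ℝ) + (matchNum (U ∩ bip (XA m) (YB m P)) : ℝ))
            + (matchNum (W ∩ bip (XD m) (YC m P)) : ℝ)) := by
          rw [Finset.sum_add_distrib, Finset.sum_const, nsmul_eq_mul, Finset.card_powerset]
          push_cast
          ring
      _ ≤ _ := Finset.sum_le_sum hptwise
  have hU := sumU hP
  calc ((P.card : ℝ) + 2 * q - 2) * (2 ^ (ABset m).card * 2 ^ (CDset m).card)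
      = (((P.card : ℝ) + (q - 1)) * 2 ^ (ABset m).card + (q - 1) * 2 ^ (ABset m).card)
        * 2 ^ (CDset m).card := by ring
    _ ≤ (((P.card : ℝ) + (q - 1)) * 2 ^ (ABset m).card
        + ∑ U ∈ (ABset m).powerset, (matchNum (U ∩ bip (XA m) (YB m P)) : ℝ))
        * 2 ^ (CDset m).card := by
        apply mul_le_mul_of_nonneg_right _ (by positivity)
        linarith
    _ = ∑ U ∈ (ABset m).powerset,
        (((P.card : ℝ) + (matchNum (U ∩ bip (XA m) (YB m P)) : ℝ) + (q - 1))
          * 2 ^ (CDset m).card) := by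
        rw [← Finset.sum_mul]
        congr 1
        rw [Finset.sum_add_distrib, Finset.sum_add_distrib, Finset.sum_const, Finset.sum_const,
          nsmul_eq_mul, nsmul_eq_mul, Finset.card_powerset]
        push_cast
        ring
    _ ≤ _ := Finset.sum_le_sum perU

end PartIIIsum

lemma Mset_AB_disj (m : ℕ) : Disjoint (Mset m) (ABset m) := by
  rw [Finset.disjoint_left]
  rintro e he he'
  simp only [Mset, ABset, Finset.mem_image, Finset.mem_univ, true_and, Prod.exists] at he he'
  obtain ⟨j, rfl⟩ := he
  obtain ⟨a, b, hab⟩ := he'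
  rcases pair_eq_iff hab.symm with ⟨h1, _⟩ | ⟨h1, h2⟩
  · exact absurd h1 (by simp [eMatch])
  · exact absurd h2 (by simp [eMatch])

lemma MAB_CD_disj (m : ℕ) : Disjoint (Mset m ∪ ABset m) (CDset m) := by
  rw [Finset.disjoint_left]
  rintro e he he'
  simp only [CDset, Finset.mem_image, Finset.mem_univ, true_and, Prod.exists] at he'
  obtain ⟨b, a, hab⟩ := he'
  rcases Finset.mem_union.1 he with hM | hA
  · simp only [Mset, Finset.mem_image, Finset.mem_univ, true_and] at hM
    obtain ⟨j, rfl⟩ := hM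
    rcases pair_eq_iff hab.symm with ⟨h1, _⟩ | ⟨h1, _⟩ <;> exact absurd h1 (by simp [eMatch])
  · simp only [ABset, Finset.mem_image, Finset.mem_univ, true_and, Prod.exists] at hA
    obtain ⟨x, y, rfl⟩ := hA
    rcases pair_eq_iff hab.symm with ⟨h1, _⟩ | ⟨h1, _⟩ <;> exact absurd h1 (by simp)

lemma expE_lower (m : ℕ) (c : ℝ) (hc : 0 < c) :
    3 * (m : ℝ) - 2 * c - (m : ℝ) / (4 * c) - 2 ≤ expMatch (graphE m) (1/2 : ℝ) := by
  have hd1 := Mset_AB_disj m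
  have hd2 := MAB_CD_disj m
  have hNE : (graphE m).card = (Mset m).card + (ABset m).card + (CDset m).card := by
    rw [graphE_eq, Finset.card_union_of_disjoint hd2, Finset.card_union_of_disjoint hd1]
  have hw : expMatch (graphE m) (1/2 : ℝ)
      = (1/2:ℝ) ^ (graphE m).card * ∑ S ∈ (graphE m).powerset, (matchNum S : ℝ) := by
    unfold expMatch
    rw [Finset.mul_sum]
    apply Finset.sum_congr rfl
    intro S hS
    rw [weight_eq hS]
  have hsplit : ∑ S ∈ (graphE m).powerset, (matchNum S : ℝ)
      = ∑ P ∈ (Mset m).powerset, ∑ U ∈ (ABset m).powerset, ∑ W ∈ (CDset m).powerset,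
          (matchNum (P ∪ U ∪ W) : ℝ) := by
    rw [graphE_eq, sum_powerset_union' hd2 (fun S => (matchNum S : ℝ)),
      sum_powerset_union' hd1
        (fun S1 => ∑ W ∈ (CDset m).powerset, (matchNum (S1 ∪ W) : ℝ))]
  have hqlow : ∀ P ∈ (Mset m).powerset,
      ((P.card:ℝ) + 2 * ((m:ℝ) - (((P.card:ℝ) - m)^2 / (4*c) + c)) - 2)
        ≤ ((P.card : ℝ) + 2 * ((min m ((m + m) - P.card) : ℕ) : ℝ) - 2) := by
    intro P hPp
    have hple : P.card ≤ m + m := by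
      rw [← Mset_card m]
      exact Finset.card_le_card (Finset.mem_powerset.1 hPp)
    have key : (m:ℝ) - (((P.card:ℝ) - m)^2/(4*c) + c)
        ≤ ((min m ((m + m) - P.card) : ℕ) : ℝ) := by
      rcases le_or_gt P.card m with hle | hlt
      · rw [Nat.min_eq_left (by omega)]
        have : (0:ℝ) ≤ ((P.card:ℝ) - m)^2/(4*c) + c := by positivity
        linarith
      · rw [Nat.min_eq_right (by omega)]
        have hcast : (((m + m) - P.card : ℕ) : ℝ) = (m:ℝ) + m - P.card := by
          rw [Nat.cast_sub hple]
          push_cast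
          ring
        rw [hcast]
        have hy : (0:ℝ) ≤ (P.card:ℝ) - m := by
          have : (m:ℝ) ≤ P.card := by exact_mod_cast hlt.le
          linarith
        have hdiv : ((P.card:ℝ) - m) - c ≤ ((P.card:ℝ) - m)^2/(4*c) := by
          rw [le_div_iff₀ (by positivity)]
          nlinarith [sq_nonneg ((P.card:ℝ) - m - 2*c)]
        linarith
    linarith
  have hs1 : ∑ P ∈ (Mset m).powerset, (P.card:ℝ) = (m:ℝ) * 2^(m+m) := by
    have h := sum_powerset_card_two (Mset m)
    rw [Mset_card, ← Finset.sum_mul] at h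
    push_cast at h ⊢
    linarith
  have hs2 : ∑ P ∈ (Mset m).powerset, ((P.card:ℝ) - m)^2 = (m:ℝ)/2 * 2^(m+m) := by
    have h := sum_powerset_var (Mset m)
    rw [Mset_card] at h
    have hcongr : ∀ P ∈ (Mset m).powerset,
        (2*(P.card:ℝ) - ((m+m : ℕ):ℝ))^2 = 4*((P.card:ℝ) - m)^2 := by
      intro P _
      push_cast
      ring
    rw [Finset.sum_congr rfl hcongr, ← Finset.mul_sum] at h
    push_cast at h ⊢
    linarith
  have hsum_low : (3*(m:ℝ) - 2*c - (m:ℝ)/(4*c) - 2) * 2^(Mset m).card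
      ≤ ∑ P ∈ (Mset m).powerset,
          ((P.card : ℝ) + 2 * ((min m ((m + m) - P.card) : ℕ) : ℝ) - 2) := by
    have hptw : ∀ P ∈ (Mset m).powerset,
        ((P.card:ℝ) + 2*((m:ℝ) - (((P.card:ℝ) - m)^2/(4*c) + c)) - 2)
          = ((P.card:ℝ) + (-(1/(2*c))) * ((P.card:ℝ) - m)^2) + (2*(m:ℝ) - 2*c - 2) := by
      intro P _
      field_simp
      ring
    have hground : ∑ P ∈ (Mset m).powerset,
        ((P.card:ℝ) + 2*((m:ℝ) - (((P.card:ℝ) - m)^2/(4*c) + c)) - 2)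
        = (3*(m:ℝ) - 2*c - (m:ℝ)/(4*c) - 2) * 2^(m+m) := by
      rw [Finset.sum_congr rfl hptw, Finset.sum_add_distrib, Finset.sum_add_distrib,
        ← Finset.mul_sum, hs1, hs2, Finset.sum_const, nsmul_eq_mul, Finset.card_powerset,
        Mset_card]
      push_cast
      field_simp
      ring
    rw [Mset_card, ← hground]
    exact Finset.sum_le_sum hqlow
  have hone : (1/2:ℝ)^(graphE m).card
      * (2^(Mset m).card * (2^(ABset m).card * 2^(CDset m).card)) = 1 := by
    have c1 : ∀ k : ℕ, (1/2:ℝ)^k * 2^k = 1 := fun k => by rw [← mul_pow]; norm_num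
    calc (1/2:ℝ)^(graphE m).card
        * (2^(Mset m).card * (2^(ABset m).card * 2^(CDset m).card))
        = ((1/2:ℝ)^(Mset m).card * 2^(Mset m).card)
          * (((1/2:ℝ)^(ABset m).card * 2^(ABset m).card)
          * ((1/2:ℝ)^(CDset m).card * 2^(CDset m).card)) := by
          rw [hNE, pow_add, pow_add]
          ring
      _ = 1 := by rw [c1, c1, c1]; norm_num
  rw [hw, hsplit]
  have hchain : (3*(m:ℝ) - 2*c - (m:ℝ)/(4*c) - 2)
      * (2^(Mset m).card * (2^(ABset m).card * 2^(CDset m).card))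
      ≤ ∑ P ∈ (Mset m).powerset, ∑ U ∈ (ABset m).powerset, ∑ W ∈ (CDset m).powerset,
          (matchNum (P ∪ U ∪ W) : ℝ) := by
    calc (3*(m:ℝ) - 2*c - (m:ℝ)/(4*c) - 2)
        * (2^(Mset m).card * (2^(ABset m).card * 2^(CDset m).card))
        = ((3*(m:ℝ) - 2*c - (m:ℝ)/(4*c) - 2) * 2^(Mset m).card)
          * (2^(ABset m).card * 2^(CDset m).card) := by ring
      _ ≤ (∑ P ∈ (Mset m).powerset,
            ((P.card : ℝ) + 2 * ((min m ((m + m) - P.card) : ℕ) : ℝ) - 2))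
          * (2^(ABset m).card * 2^(CDset m).card) :=
          mul_le_mul_of_nonneg_right hsum_low (by positivity)
      _ = ∑ P ∈ (Mset m).powerset,
            (((P.card : ℝ) + 2 * ((min m ((m + m) - P.card) : ℕ) : ℝ) - 2)
              * (2^(ABset m).card * 2^(CDset m).card)) := by
          rw [Finset.sum_mul]
      _ ≤ _ := Finset.sum_le_sum (fun P hPp => inner_bound (Finset.mem_powerset.1 hPp))
  calc 3 * (m : ℝ) - 2 * c - (m : ℝ) / (4 * c) - 2
      = (3 * (m : ℝ) - 2 * c - (m : ℝ) / (4 * c) - 2) * ((1/2:ℝ)^(graphE m).card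
        * (2^(Mset m).card * (2^(ABset m).card * 2^(CDset m).card))) := by
        rw [hone, mul_one]
    _ = (1/2:ℝ)^(graphE m).card * ((3 * (m : ℝ) - 2 * c - (m : ℝ) / (4 * c) - 2)
        * (2^(Mset m).card * (2^(ABset m).card * 2^(CDset m).card))) := by ring
    _ ≤ _ := mul_le_mul_of_nonneg_left hchain (by positivity)

/-- Since each of the `t = m + m` vertices of `B2 ∪ C2` has only `2` queried incident edges,
each existing independently with probability `1/2`: (i) the expected number of these
vertices left with no existing queried edge is at least `t/4`; (ii) the expected matching
size produced from the queried edges is at most `(5/4)·t`; while (iii) the omniscient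
optimum is at least `(3/2)·t − o(t)`, so (iv) the approximation ratio is at most
`5/6 + o(1)`. -/
theorem stmt12 :
    (∀ m : ℕ,
      (((m : ℝ) + m) / 4 ≤
        ∑ S ∈ (Wq m).powerset,
          (1 / 2 : ℝ) ^ S.card * (1 / 2) ^ ((Wq m).card - S.card) *
            (((B2C2 m).filter (fun v => ∀ e ∈ S, v ∉ e)).card : ℝ)) ∧
      expMatch (Wq m) (1 / 2) ≤ (5 / 4 : ℝ) * ((m : ℝ) + m)) ∧
    (∀ ε : ℝ, 0 < ε → ∃ M : ℕ, ∀ m : ℕ, M ≤ m →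
      (3 / 2 : ℝ) * ((m : ℝ) + m) - ε * ((m : ℝ) + m) ≤ expMatch (graphE m) (1 / 2) ∧
      expMatch (Wq m) (1 / 2) ≤ (5 / 6 + ε) * expMatch (graphE m) (1 / 2)) := by
  constructor
  · intro m
    refine ⟨part_i m, ?_⟩
    have h := expMatch_Wq_le m
    have hm0 : (0:ℝ) ≤ (m:ℝ) := Nat.cast_nonneg m
    linarith
  · intro ε hε
    refine ⟨max (⌈(1/(2*ε) + 2)/ε⌉₊ + 1) 36, fun m hm => ?_⟩
    have h36 : (36:ℕ) ≤ m := le_trans (le_max_right _ _) hm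
    have hm36 : (36:ℝ) ≤ (m:ℝ) := by exact_mod_cast h36
    have hmpos : (0:ℝ) < (m:ℝ) := by linarith
    have hceil : ((1/(2*ε) + 2)/ε : ℝ) ≤ (m:ℝ) := by
      have h1 : (⌈(1/(2*ε) + 2)/ε⌉₊ : ℕ) ≤ m := by
        have := le_trans (le_max_left _ _) hm
        omega
      calc ((1/(2*ε) + 2)/ε : ℝ) ≤ (⌈(1/(2*ε) + 2)/ε⌉₊ : ℝ) := Nat.le_ceil _
        _ ≤ (m:ℝ) := by exact_mod_cast h1
    have hkey : 1/(2*ε) + 2 ≤ ε * m := by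
      rw [div_le_iff₀ hε] at hceil
      linarith
    constructor
    · -- first conclusion
      have hE := expE_lower m (ε * m / 2) (by positivity)
      have hdiveq : (m:ℝ) / (4 * (ε * m / 2)) = 1/(2*ε) := by
        field_simp
        ring
      rw [hdiveq] at hE
      linarith
    · -- second conclusion
      have hE := expE_lower m (3 * m / 40) (by positivity)
      have hdiveq : (m:ℝ) / (4 * (3 * m / 40)) = 10/3 := by
        field_simp
        ring
      rw [hdiveq] at hE
      have hE27 : (27/10 : ℝ) * m ≤ expMatch (graphE m) (1/2) := by linarith
      have hW := expMatch_Wq_le m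
      have hEnn : (0:ℝ) ≤ expMatch (graphE m) (1/2) := le_trans (by positivity) hE27
      calc expMatch (Wq m) (1/2) ≤ (9/4 : ℝ) * m := hW
        _ = (5/6 : ℝ) * ((27/10) * m) := by ring
        _ ≤ (5/6 : ℝ) * expMatch (graphE m) (1/2) := by linarith
        _ ≤ (5/6 + ε) * expMatch (graphE m) (1/2) := by nlinarith
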